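/- arXiv:2403.17023 — 2 statements merged into one kernel-verified Lean document; each statement's English description precedes it below -/
import Mathlib

section
/- Let $\nu$ be a finite Borel measure on a connected open set $U \subset \mathbb{C}^2$ such that $\underline{d}_\nu(x) \geq \gamma$ for $\nu$-almost every $x$, where $\gamma > 2$. Let $h$ be holomorphic on $U$. If $\nu\{x \in U : h(x) = 0\} > 0$, then $h \equiv 0$ on $U$. -/
open MeasureTheory Filter

namespace HolVanish

open Metric Set
open scoped ENNReal NNReal

/-- If the distance on `A` is controlled by the distance of images under `p : ℂ×ℂ → ℂ`,
then `A` has Hausdorff dimension at most 2. -/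
lemma dimH_le_two_of_dist_le {A : Set (ℂ × ℂ)} {p : ℂ × ℂ → ℂ} {K : ℝ}
    (hp : ∀ y ∈ A, ∀ y' ∈ A, dist y y' ≤ K * dist (p y) (p y')) :
    dimH A ≤ 2 := by
  have hp' : ∀ y ∈ A, ∀ y' ∈ A, dist y y' ≤ (max K 0) * dist (p y) (p y') := by
    intro y hy y' hy'
    exact (hp y hy y' hy').trans
      (mul_le_mul_of_nonneg_right (le_max_left _ _) dist_nonneg)
  have hinj : ∀ y ∈ A, ∀ y' ∈ A, p y = p y' → y = y' := by
    intro y hy y' hy' hpy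
    have := hp' y hy y' hy'
    rw [hpy, dist_self, mul_zero] at this
    exact dist_le_zero.mp this
  set q := Function.invFunOn p A with hq
  have hsub : A ⊆ q '' (p '' A) := by
    intro a ha
    refine ⟨p a, ⟨a, ha, rfl⟩, ?_⟩
    have h1 : q (p a) ∈ A := Function.invFunOn_mem ⟨a, ha, rfl⟩
    have h2 : p (q (p a)) = p a := Function.invFunOn_eq ⟨a, ha, rfl⟩
    exact hinj _ h1 _ ha h2
  have hlip : LipschitzOnWith (Real.toNNReal (max K 0)) q (p '' A) := by
    apply LipschitzOnWith.of_dist_le_mul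
    rintro x ⟨a, ha, rfl⟩ y ⟨b, hb, rfl⟩
    have h1a : q (p a) ∈ A := Function.invFunOn_mem ⟨a, ha, rfl⟩
    have h2a : p (q (p a)) = p a := Function.invFunOn_eq ⟨a, ha, rfl⟩
    have h1b : q (p b) ∈ A := Function.invFunOn_mem ⟨b, hb, rfl⟩
    have h2b : p (q (p b)) = p b := Function.invFunOn_eq ⟨b, hb, rfl⟩
    have := hp' _ h1a _ h1b
    rw [h2a, h2b] at this
    simpa [Real.coe_toNNReal _ (le_max_right K 0)] using this
  calc dimH A ≤ dimH (q '' (p '' A)) := dimH_mono hsub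
    _ ≤ dimH (p '' A) := hlip.dimH_image_le
    _ ≤ dimH (Set.univ : Set ℂ) := dimH_mono (subset_univ _)
    _ = 2 := by
        rw [Real.dimH_univ_eq_finrank, Complex.finrank_real_complex]
        norm_num

lemma eq_zero_of_forall_le_ofReal {a : ℝ≥0∞} (h : ∀ ε : ℝ, 0 < ε → a ≤ ENNReal.ofReal ε) :
    a = 0 := by
  refine le_antisymm ?_ zero_le
  have htend : Tendsto (fun k : ℕ => ENNReal.ofReal (1 / (k + 1))) atTop (nhds 0) := by
    have h1 : Tendsto (fun k : ℕ => 1 / ((k : ℝ) + 1)) atTop (nhds 0) :=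
      tendsto_one_div_add_atTop_nhds_zero_nat
    have := (ENNReal.continuous_ofReal.tendsto 0).comp h1
    simpa [Function.comp_def] using this
  exact ge_of_tendsto htend (Eventually.of_forall fun k => h _ (by positivity))

lemma measure_singleton_null {ν : Measure (ℂ × ℂ)} {s : ℝ} (hs : 0 < s) {x : ℂ × ℂ} {ε : ℝ}
    (hε : 0 < ε) (hx : ∀ r : ℝ, 0 < r → r < ε → ν (ball x r) ≤ ENNReal.ofReal (r ^ s)) :
    ν {x} = 0 := by
  refine le_antisymm ?_ zero_le
  set f : ℕ → ℝ := fun k => (ε / 2) * (1 / (k + 1)) with hf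
  have hf0 : ∀ k : ℕ, 0 < f k := fun k => mul_pos (by linarith) (by positivity)
  have hfε : ∀ k : ℕ, f k < ε := by
    intro k
    have h1 : (1 : ℝ) / (k + 1) ≤ 1 := by
      rw [div_le_one (by positivity)]; linarith [Nat.cast_nonneg (α := ℝ) k]
    calc f k ≤ ε / 2 * 1 := mul_le_mul_of_nonneg_left h1 (by linarith)
      _ < ε := by linarith
  have hle : ∀ k : ℕ, ν {x} ≤ ENNReal.ofReal (f k ^ s) := by
    intro k
    refine le_trans (measure_mono ?_) (hx (f k) (hf0 k) (hfε k))
    intro y hy; simp only [mem_singleton_iff] at hy; subst hy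
    exact mem_ball_self (hf0 k)
  have htend : Tendsto (fun k : ℕ => ENNReal.ofReal (f k ^ s)) atTop (nhds 0) := by
    have h1 : Tendsto f atTop (nhds 0) := by
      rw [hf]
      have := tendsto_one_div_add_atTop_nhds_zero_nat (𝕜 := ℝ)
      simpa using this.const_mul (ε / 2)
    have h2 : Tendsto (fun r : ℝ => r ^ s) (nhds 0) (nhds 0) := by
      have hc : ContinuousAt (fun r : ℝ => r ^ s) 0 :=
        Real.continuousAt_rpow_const 0 s (Or.inr hs.le)
      have h0 : (0 : ℝ) ^ s = 0 := Real.zero_rpow hs.ne'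
      simpa [ContinuousAt, h0] using hc
    have := (ENNReal.continuous_ofReal.tendsto 0).comp (h2.comp h1)
    simpa [Function.comp_def] using this
  exact ge_of_tendsto htend (Eventually.of_forall hle)

/-- Mass distribution principle. -/
lemma measure_inter_good_null {ν : Measure (ℂ × ℂ)} {s : ℝ} (hs : 0 < s)
    {A G : Set (ℂ × ℂ)}
    (hG : ∀ x ∈ G, ∀ᶠ r in nhdsWithin (0:ℝ) (Set.Ioi 0),
      ν (ball x r) ≤ ENNReal.ofReal (r ^ s))
    (hA : μH[s] A = 0) : ν (A ∩ G) = 0 := by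
  set B : ℕ → Set (ℂ × ℂ) := fun n =>
    {x ∈ A | ∀ r : ℝ, 0 < r → r < 1 / (n + 1) → ν (ball x r) ≤ ENNReal.ofReal (r ^ s)} with hB
  have hcover : A ∩ G ⊆ ⋃ n, B n := by
    rintro x ⟨hxA, hxG⟩
    have h1 := hG x hxG
    rw [eventually_nhdsWithin_iff] at h1
    rcases Metric.eventually_nhds_iff.mp h1 with ⟨ε, hε, hball⟩
    rcases exists_nat_one_div_lt hε with ⟨n, hn⟩
    refine mem_iUnion.mpr ⟨n, hxA, fun r hr hrn => ?_⟩
    have hd : dist r 0 < ε := by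
      rw [Real.dist_eq, sub_zero, abs_of_pos hr]
      exact lt_trans hrn hn
    exact hball hd hr
  have hBnull : ∀ n, ν (B n) = 0 := by
    intro n
    have key : ∀ η : ℝ≥0∞, 0 < η → ν (B n) ≤ ENNReal.ofReal (2 ^ s) * η := by
      intro η hη
      have hBn : μH[s] (B n) = 0 :=
        le_antisymm (le_trans (measure_mono fun x hx => hx.1) hA.le) zero_le
      rw [MeasureTheory.Measure.hausdorffMeasure_apply] at hBn
      set r₀ : ℝ≥0∞ := ENNReal.ofReal (1 / (4 * (n + 1))) with hr₀def
      have hr₀ : 0 < r₀ := ENNReal.ofReal_pos.mpr (by positivity)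
      have hinf : (⨅ (t : ℕ → Set (ℂ × ℂ)) (_ : B n ⊆ ⋃ i, t i)
          (_ : ∀ i, EMetric.diam (t i) ≤ r₀),
          ∑' i, ⨆ _ : (t i).Nonempty, EMetric.diam (t i) ^ s) < η := by
        refine lt_of_le_of_lt ?_ hη
        rw [← hBn]
        exact le_iSup₂ (f := fun r (_ : 0 < r) => ⨅ (t : ℕ → Set (ℂ × ℂ))
          (_ : B n ⊆ ⋃ i, t i) (_ : ∀ i, EMetric.diam (t i) ≤ r),
          ∑' i, ⨆ _ : (t i).Nonempty, EMetric.diam (t i) ^ s) r₀ hr₀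
      simp only [iInf_lt_iff] at hinf
      obtain ⟨t, hcov, hdiam, hsum⟩ := hinf
      have hball' : ∀ i, ν (B n ∩ t i) ≤
          ENNReal.ofReal (2 ^ s) * ⨆ _ : (t i).Nonempty, EMetric.diam (t i) ^ s := by
        intro i
        rcases (B n ∩ t i).eq_empty_or_nonempty with he | ⟨x, hxB, hxt⟩
        · simp [he]
        · have hne : (t i).Nonempty := ⟨x, hxt⟩
          rw [ciSup_pos hne]
          set D := EMetric.diam (t i) with hD
          have hDr₀ : D ≤ r₀ := hdiam i
          have hDtop : D ≠ ⊤ := (lt_of_le_of_lt hDr₀ ENNReal.ofReal_lt_top).ne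
          rcases eq_or_ne D 0 with hD0 | hDpos
          · have hsub : B n ∩ t i ⊆ {x} := by
              rintro y ⟨_, hyt⟩
              have h1 : edist y x ≤ D := EMetric.edist_le_diam_of_mem hyt hxt
              rw [hD0] at h1
              simpa using le_antisymm h1 zero_le
            have hx0 : ν {x} = 0 :=
              measure_singleton_null hs (show (0:ℝ) < 1 / (n+1) by positivity)
                (fun r h1 h2 => hxB.2 r h1 h2)
            calc ν (B n ∩ t i) ≤ ν {x} := measure_mono hsub
              _ = 0 := hx0
              _ ≤ _ := zero_le
          · set d := D.toReal with hd
            have hd0 : 0 < d := ENNReal.toReal_pos hDpos hDtop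
            have hdle : d ≤ 1 / (4 * (n + 1)) := by
              calc d ≤ (ENNReal.ofReal (1 / (4 * (n + 1)))).toReal :=
                    ENNReal.toReal_mono ENNReal.ofReal_ne_top hDr₀
                _ = 1 / (4 * (n + 1)) := ENNReal.toReal_ofReal (by positivity)
            have hsub : B n ∩ t i ⊆ ball x (2 * d) := by
              rintro y ⟨_, hyt⟩
              have h1 : edist y x ≤ D := EMetric.edist_le_diam_of_mem hyt hxt
              have h2 : dist y x ≤ d := by
                rw [dist_edist]
                exact ENNReal.toReal_mono hDtop h1
              rw [mem_ball]
              calc dist y x ≤ d := h2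
                _ < 2 * d := by linarith
            have h2d : (2 : ℝ) * d < 1 / (n + 1) := by
              have hn1 : (0:ℝ) < (n:ℝ) + 1 := by positivity
              have hdle' : d * (4 * ((n:ℝ) + 1)) ≤ 1 := by
                rwa [← le_div_iff₀ (by positivity)]
              rw [lt_div_iff₀ hn1]
              nlinarith
            have hb := hxB.2 (2 * d) (by linarith) h2d
            calc ν (B n ∩ t i) ≤ ν (ball x (2 * d)) := measure_mono hsub
              _ ≤ ENNReal.ofReal ((2 * d) ^ s) := hb
              _ = ENNReal.ofReal (2 ^ s * d ^ s) := by
                  rw [Real.mul_rpow (by norm_num) hd0.le]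
              _ = ENNReal.ofReal (2 ^ s) * ENNReal.ofReal (d ^ s) :=
                  ENNReal.ofReal_mul (by positivity)
              _ = ENNReal.ofReal (2 ^ s) * D ^ s := by
                  rw [← ENNReal.ofReal_rpow_of_pos hd0, ENNReal.ofReal_toReal hDtop]
      calc ν (B n) ≤ ν (⋃ i, B n ∩ t i) := by
            apply measure_mono
            intro x hx
            rcases mem_iUnion.mp (hcov hx) with ⟨i, hi⟩
            exact mem_iUnion.mpr ⟨i, hx, hi⟩
        _ ≤ ∑' i, ν (B n ∩ t i) := measure_iUnion_le _
        _ ≤ ∑' i, ENNReal.ofReal (2 ^ s) *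
              ⨆ _ : (t i).Nonempty, EMetric.diam (t i) ^ s := ENNReal.tsum_le_tsum hball'
        _ = ENNReal.ofReal (2 ^ s) *
              ∑' i, ⨆ _ : (t i).Nonempty, EMetric.diam (t i) ^ s := ENNReal.tsum_mul_left
        _ ≤ ENNReal.ofReal (2 ^ s) * η := mul_le_mul_right hsum.le _
    apply eq_zero_of_forall_le_ofReal
    intro ε hε
    have h2s : (0:ℝ) < 2 ^ s := by positivity
    have := key (ENNReal.ofReal (ε / 2 ^ s)) (ENNReal.ofReal_pos.mpr (by positivity))
    calc ν (B n) ≤ ENNReal.ofReal (2 ^ s) * ENNReal.ofReal (ε / 2 ^ s) := this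
      _ = ENNReal.ofReal (2 ^ s * (ε / 2 ^ s)) := (ENNReal.ofReal_mul (by positivity)).symm
      _ = ENNReal.ofReal ε := by rw [mul_div_cancel₀ _ h2s.ne']
  refine le_antisymm ?_ zero_le
  calc ν (A ∩ G) ≤ ν (⋃ n, B n) := measure_mono hcover
    _ = 0 := measure_iUnion_null_iff.mpr hBnull

lemma ae_ball_decay (ν : Measure (ℂ × ℂ)) [IsFiniteMeasure ν] {γ s : ℝ} (hs : 0 < s)
    (hsγ : s < γ)
    (hdim : ∀ᵐ x ∂ν, γ ≤
      liminf (fun r : ℝ => Real.log (ν (Metric.ball x r)).toReal / Real.log r)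
        (nhdsWithin 0 (Set.Ioi 0))) :
    ∀ᵐ x ∂ν, ∀ᶠ r in nhdsWithin (0:ℝ) (Set.Ioi 0),
      ν (ball x r) ≤ ENNReal.ofReal (r ^ s) := by
  filter_upwards [hdim] with x hx
  set F : ℝ → ℝ := fun r => Real.log (ν (ball x r)).toReal / Real.log r with hF
  set C : ℝ := max 1 (Real.log (ν Set.univ).toReal) with hC
  have hC1 : 1 ≤ C := le_max_left _ _
  set r₀ : ℝ := Real.exp (-C) with hr₀
  have hr₀pos : 0 < r₀ := Real.exp_pos _
  have hr₀lt1 : r₀ < 1 := by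
    rw [hr₀, Real.exp_lt_one_iff]
    linarith
  -- lower bound on F on (0, r₀)
  have hFlb : ∀ r ∈ Set.Ioo (0:ℝ) r₀, -1 ≤ F r := by
    intro r ⟨hr0, hrr₀⟩
    have hlogr : Real.log r < -C := by
      calc Real.log r < Real.log r₀ := Real.log_lt_log hr0 hrr₀
        _ = -C := Real.log_exp _
    have hlogrneg : Real.log r < 0 := by linarith
    set v : ℝ := (ν (ball x r)).toReal with hv
    rcases le_or_gt v 1 with hv1 | hv1
    · have : 0 ≤ F r := by
        rw [hF]
        apply div_nonneg_of_nonpos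
        · exact Real.log_nonpos (ENNReal.toReal_nonneg) hv1
        · linarith
      linarith
    · have hvC : Real.log v ≤ C := by
        have h1 : v ≤ (ν Set.univ).toReal :=
          ENNReal.toReal_mono (measure_ne_top ν _) (measure_mono (subset_univ _))
        calc Real.log v ≤ Real.log (ν Set.univ).toReal := Real.log_le_log (by linarith) h1
          _ ≤ C := le_max_right _ _
      rw [hF, le_div_iff_of_neg hlogrneg]
      calc Real.log v ≤ C := hvC
        _ ≤ (-1) * Real.log r := by nlinarith
  have hbdd : IsBoundedUnder (· ≥ ·) (nhdsWithin (0:ℝ) (Set.Ioi 0)) F := by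
    refine isBoundedUnder_of_eventually_ge (a := -1) ?_
    filter_upwards [Ioo_mem_nhdsGT_of_mem (Set.mem_Ico.mpr ⟨le_refl (0:ℝ), hr₀pos⟩)] with r hr
    exact hFlb r hr
  have hev : ∀ᶠ r in nhdsWithin (0:ℝ) (Set.Ioi 0), s < F r :=
    eventually_lt_of_lt_liminf (lt_of_lt_of_le hsγ hx) hbdd
  filter_upwards [hev, Ioo_mem_nhdsGT_of_mem (Set.mem_Ico.mpr ⟨le_refl (0:ℝ), one_pos⟩)]
    with r hFr hr
  obtain ⟨hr0, hr1⟩ := hr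
  have hlogrneg : Real.log r < 0 := Real.log_neg hr0 hr1
  set v : ℝ := (ν (ball x r)).toReal with hv
  have hvlog : Real.log v < s * Real.log r := by
    rw [hF] at hFr
    exact (lt_div_iff_of_neg hlogrneg).mp hFr
  have hrs : s * Real.log r = Real.log (r ^ s) := (Real.log_rpow hr0 s).symm
  have hfin : ν (ball x r) ≠ ⊤ := measure_ne_top ν _
  rcases eq_or_lt_of_le (ENNReal.toReal_nonneg (a := ν (ball x r))) with hv0 | hv0
  · rw [← ENNReal.ofReal_toReal hfin]
    have hv0' : (ν (ball x r)).toReal = 0 := hv0.symm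
    rw [hv0']
    simp only [ENNReal.ofReal_zero, zero_le]
  · have hvr : v < r ^ s := by
      have := hvlog
      rw [hrs] at this
      exact (Real.log_lt_log_iff hv0 (by positivity)).mp this
    rw [← ENNReal.ofReal_toReal hfin]
    exact ENNReal.ofReal_le_ofReal hvr.le

lemma iter_analytic {f : ℂ → ℂ} {c : ℂ} {ρ : ℝ} (hf : DifferentiableOn ℂ f (ball c ρ)) (n : ℕ) :
    AnalyticOnNhd ℂ (iteratedDeriv n f) (ball c ρ) := by
  induction n with
  | zero => rw [iteratedDeriv_zero]; exact hf.analyticOnNhd isOpen_ball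
  | succ n ih => rw [iteratedDeriv_succ]; exact ih.deriv

/-- Iterated Cauchy estimates via `cderiv`. -/
lemma cauchy_iter_bound {f : ℂ → ℂ} {c : ℂ} {ρ A δ : ℝ} (hδ : 0 < δ)
    (hf : DifferentiableOn ℂ f (ball c ρ)) (hA : ∀ w ∈ ball c ρ, ‖f w‖ ≤ A) :
    ∀ n : ℕ, ∀ w ∈ ball c (ρ - n * δ), ‖iteratedDeriv n f w‖ ≤ A / δ ^ n := by
  intro n
  induction n with
  | zero =>
    intro w hw
    rw [iteratedDeriv_zero]
    simpa using hA w (by simpa using hw)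
  | succ n ih =>
    intro w hw
    have hwc : dist w c < ρ - ((n:ℝ) + 1) * δ := by
      have := mem_ball.mp hw; push_cast at this; exact this
    have hsub : closedBall w δ ⊆ ball c (ρ - n * δ) := by
      intro ζ hζ
      rw [mem_ball]
      calc dist ζ c ≤ dist ζ w + dist w c := dist_triangle _ _ _
        _ < δ + (ρ - (n + 1) * δ) := by
            have := mem_closedBall.mp hζ
            push_cast
            push_cast at hwc
            linarith
        _ ≤ ρ - n * δ := by push_cast; linarith
    have hballsub : ball c (ρ - n * δ) ⊆ ball c ρ := by
      apply ball_subset_ball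
      have : (0:ℝ) ≤ n * δ := by positivity
      linarith
    have hd : DifferentiableOn ℂ (iteratedDeriv n f) (ball c (ρ - n * δ)) :=
      ((iter_analytic hf n).mono hballsub).differentiableOn
    rw [iteratedDeriv_succ, ← Complex.cderiv_eq_deriv isOpen_ball hd hδ hsub]
    have hb : ∀ ζ ∈ sphere w δ, ‖iteratedDeriv n f ζ‖ ≤ A / δ ^ n := by
      intro ζ hζ
      exact ih ζ (hsub (sphere_subset_closedBall hζ))
    have := Complex.norm_cderiv_le hδ hb
    calc ‖Complex.cderiv δ (iteratedDeriv n f) w‖ ≤ A / δ ^ n / δ := this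
      _ = A / δ ^ (n + 1) := by rw [div_div, ← pow_succ]

lemma iteratedDeriv_sub_on {f g : ℂ → ℂ} {c : ℂ} {ρ : ℝ}
    (hf : DifferentiableOn ℂ f (ball c ρ)) (hg : DifferentiableOn ℂ g (ball c ρ)) (n : ℕ) :
    ∀ w ∈ ball c ρ, iteratedDeriv n (fun u => f u - g u) w
      = iteratedDeriv n f w - iteratedDeriv n g w := by
  induction n with
  | zero => intro w _; simp [iteratedDeriv_zero]
  | succ n ih =>
    intro w hw
    rw [iteratedDeriv_succ, iteratedDeriv_succ, iteratedDeriv_succ]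
    have hev : iteratedDeriv n (fun u => f u - g u) =ᶠ[nhds w]
        fun u => iteratedDeriv n f u - iteratedDeriv n g u := by
      filter_upwards [isOpen_ball.mem_nhds hw] with u hu
      exact ih u hu
    rw [hev.deriv_eq]
    exact deriv_sub ((iter_analytic hf n w hw).differentiableAt)
      ((iter_analytic hg n w hw).differentiableAt)

/-- A holomorphic function all of whose derivatives vanish at an interior point vanishes
on the whole ball. -/
lemma eqOn_zero_of_iteratedDeriv_zero {f : ℂ → ℂ} {c w₀ : ℂ} {ρ : ℝ}
    (hw₀ : w₀ ∈ ball c ρ) (hf : DifferentiableOn ℂ f (ball c ρ))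
    (h0 : ∀ n, iteratedDeriv n f w₀ = 0) :
    ∀ w ∈ ball c ρ, f w = 0 := by
  have hρ : 0 < ρ := pos_of_mem_ball hw₀
  set σ : ℝ := (ρ - dist w₀ c) / 2 with hσ
  have hσ0 : 0 < σ := by
    have := mem_ball.mp hw₀
    rw [hσ]; linarith
  have hsub : closedBall w₀ σ ⊆ ball c ρ := by
    intro ζ hζ
    rw [mem_ball]
    calc dist ζ c ≤ dist ζ w₀ + dist w₀ c := dist_triangle _ _ _
      _ ≤ σ + dist w₀ c := by linarith [mem_closedBall.mp hζ]
      _ < ρ := by rw [hσ]; linarith [mem_ball.mp hw₀]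
  -- power series on the closed ball of radius σ
  set σ' : ℝ≥0 := Real.toNNReal σ with hσ'
  have hσ'0 : 0 < σ' := Real.toNNReal_pos.mpr hσ0
  have hσc : (σ' : ℝ) = σ := Real.coe_toNNReal _ hσ0.le
  have hfd : DifferentiableOn ℂ f (closedBall w₀ σ') := by
    rw [hσc]; exact hf.mono hsub
  have hps := hfd.hasFPowerSeriesOnBall hσ'0
  have hzero : ∀ w ∈ ball w₀ σ, f w = 0 := by
    intro w hwball
    have hy : w - w₀ ∈ Metric.eball (0:ℂ) σ' := by
      rw [mem_emetric_ball_zero_iff]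
      rw [enorm_eq_nnnorm, ENNReal.coe_lt_coe,
        ← NNReal.coe_lt_coe, coe_nnnorm, hσc, ← dist_eq_norm]
      exact mem_ball.mp hwball
    have hsum := hps.sum hy
    have hterm : ∀ n, (cauchyPowerSeries f w₀ σ' n) (fun _ => w - w₀) = 0 := by
      intro n
      have h1 := hps.factorial_smul (w - w₀) n
      have h2 : (iteratedFDeriv ℂ n f w₀ fun _ => w - w₀)
          = (w - w₀) ^ n • iteratedDeriv n f w₀ := by
        have h3 : (fun _ : Fin n => w - w₀) = fun _ : Fin n => (w - w₀) • (1:ℂ) := by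
          funext i; simp
        rw [h3, ContinuousMultilinearMap.map_smul_univ]
        simp [iteratedDeriv_eq_iteratedFDeriv, smul_eq_mul]
      rw [h2, h0 n, smul_zero] at h1
      have hfac : (n.factorial : ℂ) ≠ 0 := by
        exact_mod_cast Nat.cast_ne_zero.mpr n.factorial_ne_zero
      have := h1
      rcases smul_eq_zero.mp h1 with h | h
      · exact absurd (by exact_mod_cast h) n.factorial_ne_zero
      · exact h
    have hzero' : f (w₀ + (w - w₀)) = 0 := by
      rw [hsum]
      unfold FormalMultilinearSeries.sum
      simp [hterm]
    simpa using hzero'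
  -- extend by the identity theorem
  have han : AnalyticOnNhd ℂ f (ball c ρ) := hf.analyticOnNhd isOpen_ball
  have hev : f =ᶠ[nhds w₀] 0 := by
    filter_upwards [isOpen_ball.mem_nhds (mem_ball_self hσ0)] with u hu
    exact hzero u hu
  intro w hw
  exact han.eqOn_zero_of_preconnected_of_eventuallyEq_zero
    (convex_ball c ρ).isPreconnected hw₀ hev hw

/-- Zeros of a non-identically-zero holomorphic function on a ball are countable. -/
lemma countable_zeros {q : ℂ → ℂ} {c : ℂ} {ρ : ℝ} (hq : DifferentiableOn ℂ q (ball c ρ))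
    (hne : ¬ Set.EqOn q 0 (ball c ρ)) : {z ∈ ball c ρ | q z = 0}.Countable := by
  set Z := {z ∈ ball c ρ | q z = 0} with hZ
  have key : ∀ r : ℝ, r < ρ → (Z ∩ closedBall c r).Finite := by
    intro r hr
    by_contra hinf
    rw [← Set.not_infinite, not_not] at hinf
    obtain ⟨x, hxK, hacc⟩ := hinf.exists_accPt_of_subset_isCompact
      (isCompact_closedBall c r) inter_subset_right
    have hxball : x ∈ ball c ρ := lt_of_le_of_lt (mem_closedBall.mp hxK) hr
    have hfreq : ∃ᶠ z in nhdsWithin x {x}ᶜ, q z = 0 := by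
      have h1 := accPt_iff_frequently.mp hacc
      rw [frequently_nhdsWithin_iff]
      apply h1.mono
      rintro y ⟨hyx, hyZ, _⟩
      exact ⟨hyZ.2, hyx⟩
    exact hne (AnalyticOnNhd.eqOn_zero_of_preconnected_of_frequently_eq_zero
      (hq.analyticOnNhd isOpen_ball) (convex_ball c ρ).isPreconnected hxball hfreq)
  have hcov : Z ⊆ ⋃ m : ℕ, (Z ∩ closedBall c (ρ - 1 / (m + 1))) := by
    intro z hz
    have hzball : z ∈ ball c ρ := hz.1
    have : 0 < ρ - dist z c := by linarith [mem_ball.mp hzball]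
    obtain ⟨m, hm⟩ := exists_nat_one_div_lt this
    refine mem_iUnion.mpr ⟨m, hz, ?_⟩
    rw [mem_closedBall]
    push_cast at hm ⊢
    linarith
  refine Set.Countable.mono hcov (Set.countable_iUnion fun m => ?_)
  refine (key (ρ - 1 / (m + 1)) ?_).countable
  have : (0:ℝ) < 1 / ((m:ℝ) + 1) := by positivity
  linarith

lemma mem_ball_prod {u cen : ℂ × ℂ} {r : ℝ} :
    u ∈ ball cen r ↔ u.1 ∈ ball cen.1 r ∧ u.2 ∈ ball cen.2 r := by
  rw [← ball_prod_same, Set.mem_prod]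

/-- Local structure of the zero set of a separately-regular holomorphic function. -/
lemma local_structure {h : ℂ × ℂ → ℂ} {U : Set (ℂ × ℂ)} (hUopen : IsOpen U)
    (hhol : DifferentiableOn ℂ h U)
    {x : ℂ × ℂ} (hx : x ∈ U) (hnl : ¬ ∀ᶠ u in nhds x, h u = 0) :
    ∃ R > 0, ball x R ⊆ U ∧ ∃ 𝒞 : Set (Set (ℂ × ℂ)), 𝒞.Countable ∧
      {y ∈ ball x R | h y = 0} ⊆ ⋃₀ 𝒞 ∧ ∀ A ∈ 𝒞, dimH A ≤ 2 := by
  -- choose radius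
  obtain ⟨ε, hε, hεU⟩ : ∃ ε > 0, closedBall x ε ⊆ U :=
    nhds_basis_closedBall.mem_iff.mp (hUopen.mem_nhds hx)
  set R : ℝ := ε / 2 with hRdef
  have hR0 : 0 < R := by rw [hRdef]; linarith
  have hKU : closedBall x (2 * R) ⊆ U := by
    rw [show 2 * R = ε by rw [hRdef]; ring]
    exact hεU
  have hBU : ball x R ⊆ U := fun y hy => hKU (mem_closedBall.mpr (by
    have := mem_ball.mp hy; linarith))
  -- bound on h
  obtain ⟨M, hM⟩ := (isCompact_closedBall x (2 * R)).exists_bound_of_continuousOn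
    ((hhol.mono hKU).continuousOn)
  have hM0 : 0 ≤ M :=
    le_trans (norm_nonneg _) (hM x (mem_closedBall_self (by linarith)))
  -- membership helper
  have hmemK : ∀ z ∈ closedBall x.1 (2*R), ∀ w ∈ closedBall x.2 (2*R),
      (z, w) ∈ closedBall x (2*R) := by
    intro z hz w hw
    rw [← closedBall_prod_same]
    exact ⟨hz, hw⟩
  -- slices
  have hslice2 : ∀ z ∈ closedBall x.1 (2*R),
      DifferentiableOn ℂ (fun w => h (z, w)) (ball x.2 (2*R)) := by
    intro z hz
    apply DifferentiableOn.comp (t := U) hhol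
    · exact ((differentiable_const z).prodMk differentiable_id).differentiableOn
    · intro w hw
      exact hKU (hmemK z hz w (ball_subset_closedBall hw))
  have hslice1 : ∀ w ∈ closedBall x.2 (2*R),
      DifferentiableOn ℂ (fun z => h (z, w)) (ball x.1 (2*R)) := by
    intro w hw
    apply DifferentiableOn.comp (t := U) hhol
    · exact (differentiable_id.prodMk (differentiable_const w)).differentiableOn
    · intro z hz
      exact hKU (hmemK z (ball_subset_closedBall hz) w hw)
  -- h is Lipschitz in z
  have hLip0 : ∀ w ∈ closedBall x.2 (2*R), ∀ z ∈ ball x.1 R, ∀ z' ∈ ball x.1 R,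
      ‖h (z, w) - h (z', w)‖ ≤ (M / R) * ‖z - z'‖ := by
    intro w hw
    have hderiv : ∀ ζ ∈ ball x.1 R, ‖deriv (fun z => h (z, w)) ζ‖ ≤ M / R := by
      intro ζ hζ
      have hsub : closedBall ζ R ⊆ ball x.1 (2*R) := by
        intro ξ hξ
        rw [mem_ball]
        calc dist ξ x.1 ≤ dist ξ ζ + dist ζ x.1 := dist_triangle _ _ _
          _ < R + R := by
              have h1 := mem_closedBall.mp hξ
              have h2 := mem_ball.mp hζ
              linarith
          _ = 2 * R := by ring
      rw [← Complex.cderiv_eq_deriv isOpen_ball (hslice1 w hw) hR0 hsub]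
      apply Complex.norm_cderiv_le hR0
      intro ξ hξ
      apply hM
      apply hmemK
      · have := hsub (sphere_subset_closedBall hξ)
        exact ball_subset_closedBall this
      · exact hw
    intro z hz z' hz'
    have hd2 : ∀ ζ ∈ ball x.1 R,
        HasDerivWithinAt (fun z => h (z, w)) (deriv (fun z => h (z, w)) ζ) (ball x.1 R) ζ := by
      intro ζ hζ
      have hζ2 : ζ ∈ ball x.1 (2*R) := ball_subset_ball (by linarith) hζ
      exact (((hslice1 w hw).differentiableAt
        (isOpen_ball.mem_nhds hζ2)).hasDerivAt).hasDerivWithinAt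
    exact Convex.norm_image_sub_le_of_norm_hasDerivWithin_le hd2 hderiv
      (convex_ball _ _) hz' hz
  -- the family of w-derivatives
  set G : ℕ → ℂ × ℂ → ℂ := fun b y => iteratedDeriv b (fun w => h (y.1, w)) y.2 with hGdef
  set L : ℕ → ℝ := fun b => (M / R) / (R / (b + 1)) ^ b with hLdef
  have hL0 : ∀ b, 0 ≤ L b := by
    intro b
    rw [hLdef]
    positivity
  -- G is Lipschitz in z
  have hLipG : ∀ b : ℕ, ∀ z ∈ ball x.1 R, ∀ z' ∈ ball x.1 R, ∀ w ∈ ball x.2 R,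
      ‖G b (z, w) - G b (z', w)‖ ≤ L b * ‖z - z'‖ := by
    intro b z hz z' hz' w hw
    have hzc : z ∈ closedBall x.1 (2*R) :=
      ball_subset_closedBall (ball_subset_ball (by linarith) hz)
    have hz'c : z' ∈ closedBall x.1 (2*R) :=
      ball_subset_closedBall (ball_subset_ball (by linarith) hz')
    have hφd : DifferentiableOn ℂ (fun ω => h (z, ω) - h (z', ω)) (ball x.2 (2*R)) :=
      (hslice2 z hzc).sub (hslice2 z' hz'c)
    have hφb : ∀ ω ∈ ball x.2 (2*R), ‖h (z, ω) - h (z', ω)‖ ≤ (M / R) * ‖z - z'‖ := by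
      intro ω hω
      exact hLip0 ω (ball_subset_closedBall hω) z hz z' hz'
    have hδpos : 0 < R / (b + 1) := by positivity
    have hmem : w ∈ ball x.2 (2*R - b * (R / (b+1))) := by
      rw [mem_ball]
      have h1 : (b:ℝ) * (R / (b+1)) ≤ R := by
        rw [mul_div_assoc']
        rw [div_le_iff₀ (by positivity : (0:ℝ) < (b:ℝ)+1)]
        nlinarith [Nat.cast_nonneg (α := ℝ) b]
      have := mem_ball.mp hw
      linarith
    have hbound := cauchy_iter_bound hδpos hφd hφb b w hmem
    have hsubeq := iteratedDeriv_sub_on (hslice2 z hzc) (hslice2 z' hz'c) b w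
      (ball_subset_ball (by linarith) hw)
    calc ‖G b (z, w) - G b (z', w)‖
        = ‖iteratedDeriv b (fun ω => h (z, ω) - h (z', ω)) w‖ := by
          rw [hsubeq]
      _ ≤ (M / R) * ‖z - z'‖ / (R / (b+1)) ^ b := hbound
      _ = L b * ‖z - z'‖ := by rw [hLdef]; ring
  -- Step D : local graph property near nondegenerate zeros
  have hstepD : ∀ b : ℕ, ∀ y₀ ∈ ball x R, G (b+1) y₀ ≠ 0 →
      ∃ δ > 0, dimH {u ∈ ball y₀ δ | G b u = 0} ≤ 2 := by
    intro b y₀ hy₀ hdne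
    set d : ℂ := G (b+1) y₀ with hd
    have hd0 : 0 < ‖d‖ := norm_pos_iff.mpr hdne
    have hy₀c := mem_ball_prod.mp hy₀
    have hy₀1c : y₀.1 ∈ closedBall x.1 (2*R) :=
      ball_subset_closedBall (ball_subset_ball (by linarith) hy₀c.1)
    -- continuity of G (b+1) (y₀.1, ·) at y₀.2
    have hy₀2R : y₀.2 ∈ ball x.2 (2*R) := ball_subset_ball (by linarith) hy₀c.2
    have hcw : ContinuousAt (fun ω => G (b+1) (y₀.1, ω)) y₀.2 := by
      have han := iter_analytic (hslice2 y₀.1 hy₀1c) (b+1)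
      exact (han y₀.2 hy₀2R).continuousAt
    obtain ⟨δ₂, hδ₂0, hδ₂⟩ := Metric.continuousAt_iff.mp hcw (‖d‖/4) (by positivity)
    set δ : ℝ := min (min δ₂ (‖d‖ / (4 * (L (b+1) + 1)))) (R - dist y₀ x) with hδdef
    have hδ0 : 0 < δ := by
      rw [hδdef]
      refine lt_min (lt_min hδ₂0 (by positivity)) ?_
      have := mem_ball.mp hy₀
      linarith
    have hδball : ball y₀ δ ⊆ ball x R := by
      intro u hu
      rw [mem_ball]
      calc dist u x ≤ dist u y₀ + dist y₀ x := dist_triangle _ _ _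
        _ < δ + dist y₀ x := by linarith [mem_ball.mp hu]
        _ ≤ R := by
            have : δ ≤ R - dist y₀ x := min_le_right _ _
            linarith
    -- uniform closeness of G (b+1) to d on ball y₀ δ
    have hclose : ∀ u ∈ ball y₀ δ, ‖G (b+1) u - d‖ ≤ ‖d‖/2 := by
      intro u hu
      have huc := mem_ball_prod.mp hu
      have huR := mem_ball_prod.mp (hδball hu)
      have e1 : ‖G (b+1) (u.1, u.2) - G (b+1) (y₀.1, u.2)‖ ≤ L (b+1) * ‖u.1 - y₀.1‖ :=
        hLipG (b+1) u.1 huR.1 y₀.1 hy₀c.1 u.2 huR.2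
      have e1' : L (b+1) * ‖u.1 - y₀.1‖ ≤ ‖d‖/4 := by
        have h1 : ‖u.1 - y₀.1‖ ≤ δ := by
          rw [← dist_eq_norm]
          exact le_of_lt (mem_ball.mp huc.1)
        have h2 : δ ≤ ‖d‖ / (4 * (L (b+1) + 1)) :=
          le_trans (min_le_left _ _) (min_le_right _ _)
        have h3 : L (b+1) * ‖u.1 - y₀.1‖ ≤ L (b+1) * (‖d‖ / (4 * (L (b+1) + 1))) := by
          apply mul_le_mul_of_nonneg_left (le_trans h1 h2) (hL0 _)
        refine le_trans h3 ?_
        rw [mul_div_assoc', div_le_div_iff₀ (by positivity) (by norm_num : (0:ℝ) < 4)]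
        nlinarith [hL0 (b+1), hd0]
      have e2 : ‖G (b+1) (y₀.1, u.2) - d‖ ≤ ‖d‖/4 := by
        have h1 : dist u.2 y₀.2 < δ₂ := by
          have := mem_ball.mp huc.2
          have hδle : δ ≤ δ₂ := le_trans (min_le_left _ _) (min_le_left _ _)
          linarith
        have := hδ₂ h1
        rw [dist_eq_norm] at this
        exact le_of_lt this
      calc ‖G (b+1) u - d‖
          = ‖(G (b+1) (u.1, u.2) - G (b+1) (y₀.1, u.2)) + (G (b+1) (y₀.1, u.2) - d)‖ := by
            ring_nf
      _ ≤ ‖G (b+1) (u.1, u.2) - G (b+1) (y₀.1, u.2)‖ + ‖G (b+1) (y₀.1, u.2) - d‖ :=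
            norm_add_le _ _
      _ ≤ ‖d‖/4 + ‖d‖/4 := add_le_add (le_trans e1 e1') e2
      _ = ‖d‖/2 := by ring
    refine ⟨δ, hδ0, ?_⟩
    -- the MVT estimate in the w direction
    have hMVT : ∀ z ∈ ball y₀.1 δ, ∀ w1 ∈ ball y₀.2 δ, ∀ w2 ∈ ball y₀.2 δ,
        ‖(G b (z, w2) - d * w2) - (G b (z, w1) - d * w1)‖ ≤ (‖d‖/2) * ‖w2 - w1‖ := by
      intro z hzδ w1 h1 w2 h2
      have hzc : z ∈ closedBall x.1 (2*R) := by
        have : (z, y₀.2) ∈ ball y₀ δ := by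
          rw [mem_ball_prod]
          exact ⟨hzδ, mem_ball_self hδ0⟩
        have := (mem_ball_prod.mp (hδball this)).1
        exact ball_subset_closedBall (ball_subset_ball (by linarith) this)
      have hDW : ∀ ω ∈ ball y₀.2 δ,
          HasDerivWithinAt (fun ω => G b (z, ω) - d * ω)
            (G (b+1) (z, ω) - d) (ball y₀.2 δ) ω := by
        intro ω hω
        have hω2R : ω ∈ ball x.2 (2*R) := by
          have hmem : (z, ω) ∈ ball y₀ δ := mem_ball_prod.mpr ⟨hzδ, hω⟩
          exact ball_subset_ball (by linarith) (mem_ball_prod.mp (hδball hmem)).2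
        have han := iter_analytic (hslice2 z hzc) b
        have hda := (han ω hω2R).differentiableAt.hasDerivAt
        have hder : deriv (iteratedDeriv b (fun w => h (z, w))) ω = G (b+1) (z, ω) := by
          show _ = iteratedDeriv (b+1) (fun w => h (z, w)) ω
          rw [iteratedDeriv_succ]
        rw [hder] at hda
        have hlin : HasDerivAt (fun ω : ℂ => d * ω) d ω := by
          simpa using (hasDerivAt_id ω).const_mul d
        exact (hda.sub hlin).hasDerivWithinAt
      have hBnd : ∀ ω ∈ ball y₀.2 δ, ‖G (b+1) (z, ω) - d‖ ≤ ‖d‖/2 := by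
        intro ω hω
        exact hclose (z, ω) (mem_ball_prod.mpr ⟨hzδ, hω⟩)
      exact Convex.norm_image_sub_le_of_norm_hasDerivWithin_le hDW hBnd
        (convex_ball _ _) h1 h2
    -- pairwise distance estimate and conclusion
    apply dimH_le_two_of_dist_le (p := Prod.fst) (K := 1 + 2 * L b / ‖d‖)
    rintro y ⟨hyball, hy0⟩ y' ⟨hy'ball, hy'0⟩
    have hyc := mem_ball_prod.mp hyball
    have hy'c := mem_ball_prod.mp hy'ball
    have hyR := mem_ball_prod.mp (hδball hyball)
    have hy'R := mem_ball_prod.mp (hδball hy'ball)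
    -- w-separation
    have e1 := hMVT y.1 hyc.1 y.2 hyc.2 y'.2 hy'c.2
    have hy0' : G b (y.1, y.2) = 0 := hy0
    rw [hy0'] at e1
    have e2 : (‖d‖/2) * ‖y'.2 - y.2‖ ≤ ‖G b (y.1, y'.2)‖ := by
      have h1 : ‖d * (y'.2 - y.2)‖ = ‖d‖ * ‖y'.2 - y.2‖ := by
        rw [norm_mul]
      have h2 : ‖G b (y.1, y'.2) - d * (y'.2 - y.2)‖ ≤ (‖d‖/2) * ‖y'.2 - y.2‖ := by
        have : G b (y.1, y'.2) - d * y'.2 - (0 - d * y.2)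
            = G b (y.1, y'.2) - d * (y'.2 - y.2) := by ring
        rw [this] at e1
        exact e1
      have h3 := norm_sub_norm_le (d * (y'.2 - y.2)) (d * (y'.2 - y.2) - G b (y.1, y'.2))
      have h4 : d * (y'.2 - y.2) - (d * (y'.2 - y.2) - G b (y.1, y'.2)) = G b (y.1, y'.2) := by
        ring
      rw [h4] at h3
      have h5 : ‖d * (y'.2 - y.2) - G b (y.1, y'.2)‖ = ‖G b (y.1, y'.2) - d * (y'.2 - y.2)‖ :=
        norm_sub_rev _ _
      rw [h5, h1] at h3
      nlinarith [h2, h3]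
    have e3 : ‖G b (y.1, y'.2)‖ ≤ L b * ‖y.1 - y'.1‖ := by
      have hy'0' : G b (y'.1, y'.2) = 0 := hy'0
      calc ‖G b (y.1, y'.2)‖ = ‖G b (y.1, y'.2) - G b (y'.1, y'.2)‖ := by
            rw [hy'0', sub_zero]
        _ ≤ L b * ‖y.1 - y'.1‖ := hLipG b y.1 hyR.1 y'.1 hy'R.1 y'.2 hy'R.2
    have e4 : ‖y.2 - y'.2‖ ≤ (2 * L b / ‖d‖) * ‖y.1 - y'.1‖ := by
      have h1 : (‖d‖/2) * ‖y'.2 - y.2‖ ≤ L b * ‖y.1 - y'.1‖ := le_trans e2 e3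
      rw [norm_sub_rev, div_mul_eq_mul_div, le_div_iff₀ hd0]
      nlinarith [h1]
    rw [Prod.dist_eq]
    simp only [dist_eq_norm]
    apply max_le
    · have hK1 : (1:ℝ) ≤ 1 + 2 * L b / ‖d‖ := by
        have : 0 ≤ 2 * L b / ‖d‖ := by positivity
        linarith
      calc ‖y.1 - y'.1‖ = 1 * ‖y.1 - y'.1‖ := (one_mul _).symm
        _ ≤ (1 + 2 * L b / ‖d‖) * ‖y.1 - y'.1‖ :=
            mul_le_mul_of_nonneg_right hK1 (norm_nonneg _)
    · calc ‖y.2 - y'.2‖ ≤ (2 * L b / ‖d‖) * ‖y.1 - y'.1‖ := e4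
        _ ≤ (1 + 2 * L b / ‖d‖) * ‖y.1 - y'.1‖ := by
            apply mul_le_mul_of_nonneg_right _ (norm_nonneg _)
            linarith
  -- nondegenerate witness for the polydisc
  have hPnz : ∃ p : ℂ × ℂ, p.1 ∈ ball x.1 R ∧ p.2 ∈ ball x.2 (2*R) ∧ h p ≠ 0 := by
    by_contra hcon
    push_neg at hcon
    apply hnl
    filter_upwards [isOpen_ball.mem_nhds (mem_ball_self hR0)] with u hu
    have huc := mem_ball_prod.mp hu
    exact hcon u huc.1 (ball_subset_ball (by linarith) huc.2)
  obtain ⟨p, hp1, hp2, hp0⟩ := hPnz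
  have hqd : DifferentiableOn ℂ (fun z => h (z, p.2)) (ball x.1 R) :=
    (hslice1 p.2 (ball_subset_closedBall hp2)).mono (ball_subset_ball (by linarith))
  have hqne : ¬ Set.EqOn (fun z => h (z, p.2)) 0 (ball x.1 R) := by
    intro hEq
    exact hp0 (by simpa using hEq hp1)
  have hBcount := countable_zeros hqd hqne
  set BP := {z ∈ ball x.1 R | (fun z => h (z, p.2)) z = 0} with hBP
  -- decomposition
  have hdecomp : {y ∈ ball x R | h y = 0} ⊆
      (⋃ z ∈ BP, ({z} : Set ℂ) ×ˢ (univ : Set ℂ)) ∪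
      ⋃ b : ℕ, {y ∈ ball x R | G b y = 0 ∧ G (b+1) y ≠ 0} := by
    rintro y ⟨hyball, hy0⟩
    have hyc := mem_ball_prod.mp hyball
    by_cases hcase : ∃ b, G b y ≠ 0
    · right
      obtain ⟨b₀, hb₀spec⟩ := hcase
      have hex : ∃ b, G b y ≠ 0 := ⟨b₀, hb₀spec⟩
      set bm := Nat.find hex with hbm
      have hbmspec : G bm y ≠ 0 := Nat.find_spec hex
      have hbmmin : ∀ k < bm, G k y = 0 := fun k hk => not_not.mp (Nat.find_min hex hk)
      have hbmne : bm ≠ 0 := by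
        intro h0
        apply hbmspec
        rw [h0]
        show iteratedDeriv 0 (fun w => h (y.1, w)) y.2 = 0
        rw [iteratedDeriv_zero]
        simpa using hy0
      obtain ⟨b, hb⟩ := Nat.exists_eq_succ_of_ne_zero hbmne
      refine mem_iUnion.mpr ⟨b, hyball, ?_, ?_⟩
      · exact hbmmin b (by omega)
      · rw [show b + 1 = bm by omega]
        exact hbmspec
    · left
      push_neg at hcase
      have hz1 : y.1 ∈ closedBall x.1 (2*R) :=
        ball_subset_closedBall (ball_subset_ball (by linarith) hyc.1)
      have hslice0 : ∀ w ∈ ball x.2 (2*R), h (y.1, w) = 0 :=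
        eqOn_zero_of_iteratedDeriv_zero (ball_subset_ball (by linarith) hyc.2)
          (hslice2 y.1 hz1) (fun n => hcase n)
      have hyBP : y.1 ∈ BP := ⟨hyc.1, hslice0 p.2 hp2⟩
      refine mem_biUnion hyBP ?_
      exact ⟨rfl, trivial⟩
  -- pieces for each b
  have hpieces : ∀ b : ℕ, ∃ 𝒟 : Set (Set (ℂ × ℂ)), 𝒟.Countable ∧
      {y ∈ ball x R | G b y = 0 ∧ G (b+1) y ≠ 0} ⊆ ⋃₀ 𝒟 ∧ ∀ A ∈ 𝒟, dimH A ≤ 2 := by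
    intro b
    set W := {y ∈ ball x R | G b y = 0 ∧ G (b+1) y ≠ 0} with hW
    have hδex : ∀ y ∈ W, ∃ δ > 0, dimH {u ∈ ball y δ | G b u = 0} ≤ 2 := fun y hy =>
      hstepD b y hy.1 hy.2.2
    choose! δ hδ0 hδdim using hδex
    obtain ⟨T, hTsub, hTc, hTcov⟩ := TopologicalSpace.countable_cover_nhdsWithin
      (f := fun y => ball y (δ y)) (s := W)
      (fun y hy => nhdsWithin_le_nhds (ball_mem_nhds _ (hδ0 y hy)))
    refine ⟨(fun y => W ∩ ball y (δ y)) '' T, hTc.image _, ?_, ?_⟩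
    · intro u hu
      obtain ⟨y, hyT, hyball⟩ := mem_iUnion₂.mp (hTcov hu)
      exact ⟨W ∩ ball y (δ y), ⟨y, hyT, rfl⟩, hu, hyball⟩
    · rintro A ⟨y, hyT, rfl⟩
      refine le_trans (dimH_mono ?_) (hδdim y (hTsub hyT))
      rintro u ⟨huW, huball⟩
      exact ⟨huball, huW.2.1⟩
  choose 𝒟 h𝒟c h𝒟cov h𝒟dim using hpieces
  refine ⟨R, hR0, hBU,
    ((fun z => ({z} : Set ℂ) ×ˢ (univ : Set ℂ)) '' BP) ∪ ⋃ b, 𝒟 b, ?_, ?_, ?_⟩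
  · exact (hBcount.image _).union (countable_iUnion h𝒟c)
  · intro y hy
    rcases hdecomp hy with hvert | hWb
    · obtain ⟨z, hzBP, hzmem⟩ := mem_iUnion₂.mp hvert
      exact ⟨({z} : Set ℂ) ×ˢ (univ : Set ℂ), Or.inl ⟨z, hzBP, rfl⟩, hzmem⟩
    · obtain ⟨b, hyb⟩ := mem_iUnion.mp hWb
      obtain ⟨A, hA𝒟, hyA⟩ := (h𝒟cov b) hyb
      exact ⟨A, Or.inr (mem_iUnion.mpr ⟨b, hA𝒟⟩), hyA⟩
  · rintro A (⟨z, hzBP, rfl⟩ | hA)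
    · apply dimH_le_two_of_dist_le (p := Prod.snd) (K := 1)
      rintro y ⟨hy1, -⟩ y' ⟨hy'1, -⟩
      rw [Prod.dist_eq]
      simp only [mem_singleton_iff] at hy1 hy'1
      rw [hy1, hy'1, dist_self, one_mul]
      exact max_le dist_nonneg (le_refl _)
    · obtain ⟨b, hAb⟩ := mem_iUnion.mp hA
      exact h𝒟dim b A hAb

/-- Identity theorem for separately holomorphic functions on a connected open set in ℂ²,
via a clopen argument reducing to one variable. -/
lemma not_locally_zero {h : ℂ × ℂ → ℂ} {U : Set (ℂ × ℂ)} (hUopen : IsOpen U)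
    (hUconn : IsConnected U) (hhol : DifferentiableOn ℂ h U)
    {x₀ : ℂ × ℂ} (hx₀U : x₀ ∈ U) (hx₀ : h x₀ ≠ 0) :
    ∀ y ∈ U, ¬ ∀ᶠ u in nhds y, h u = 0 := by
  intro y hyU hev
  set V : Set (ℂ × ℂ) := {v | v ∈ U ∧ ∀ᶠ u in nhds v, h u = 0} with hV
  have slice2 : ∀ v : ℂ × ℂ, ∀ ρ : ℝ, ball v ρ ⊆ U → ∀ z ∈ ball v.1 ρ,
      DifferentiableOn ℂ (fun w => h (z, w)) (ball v.2 ρ) := by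
    intro v ρ hρU z hz
    apply DifferentiableOn.comp (t := U) hhol
    · exact ((differentiable_const z).prodMk differentiable_id).differentiableOn
    · intro w hw
      exact hρU (mem_ball_prod.mpr ⟨hz, hw⟩)
  have slice1 : ∀ v : ℂ × ℂ, ∀ ρ : ℝ, ball v ρ ⊆ U → ∀ w ∈ ball v.2 ρ,
      DifferentiableOn ℂ (fun z => h (z, w)) (ball v.1 ρ) := by
    intro v ρ hρU w hw
    apply DifferentiableOn.comp (t := U) hhol
    · exact (differentiable_id.prodMk (differentiable_const w)).differentiableOn
    · intro z hz
      exact hρU (mem_ball_prod.mpr ⟨hz, hw⟩)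
  have hclose : ∀ v ∈ U, v ∈ closure V → v ∈ V := by
    intro v hvU hvcl
    obtain ⟨ρ, hρ0, hρU⟩ := Metric.isOpen_iff.mp hUopen v hvU
    obtain ⟨pt, hptV, hptd⟩ : ∃ pt ∈ V, dist pt v < ρ / 2 := by
      obtain ⟨pt, hptV, hd⟩ := Metric.mem_closure_iff.mp hvcl (ρ/2) (by linarith)
      exact ⟨pt, hptV, by rwa [dist_comm] at hd⟩
    obtain ⟨σ, hσ0, hσ⟩ := Metric.eventually_nhds_iff.mp hptV.2
    set σ' : ℝ := min σ (ρ/2) with hσ'def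
    have hσ'0 : 0 < σ' := lt_min hσ0 (by linarith)
    have hpt1 : pt.1 ∈ ball v.1 ρ := by
      rw [mem_ball]
      calc dist pt.1 v.1 ≤ dist pt v := by
            rw [Prod.dist_eq]; exact le_max_left _ _
        _ < ρ/2 := hptd
        _ < ρ := by linarith
    have hpt2 : pt.2 ∈ ball v.2 ρ := by
      rw [mem_ball]
      calc dist pt.2 v.2 ≤ dist pt v := by
            rw [Prod.dist_eq]; exact le_max_right _ _
        _ < ρ/2 := hptd
        _ < ρ := by linarith
    have hball2 : ∀ w ∈ ball pt.2 σ', w ∈ ball v.2 ρ := by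
      intro w hw
      rw [mem_ball]
      calc dist w v.2 ≤ dist w pt.2 + dist pt.2 v.2 := dist_triangle _ _ _
        _ < σ' + ρ/2 := by
            have h1 := mem_ball.mp hw
            have h2 : dist pt.2 v.2 < ρ/2 :=
              lt_of_le_of_lt (by rw [Prod.dist_eq]; exact le_max_right _ _) hptd
            linarith
        _ ≤ ρ := by
            have := min_le_right σ (ρ/2)
            rw [hσ'def]
            linarith
    -- Step (i): vanishing on the strip ball v.1 ρ × ball pt.2 σ'
    have hstep1 : ∀ w ∈ ball pt.2 σ', ∀ z ∈ ball v.1 ρ, h (z, w) = 0 := by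
      intro w hw z hz
      have hq : DifferentiableOn ℂ (fun z => h (z, w)) (ball v.1 ρ) :=
        slice1 v ρ hρU w (hball2 w hw)
      have hev1 : (fun z => h (z, w)) =ᶠ[nhds pt.1] 0 := by
        filter_upwards [isOpen_ball.mem_nhds (mem_ball_self hσ'0)] with ζ hζ
        apply hσ
        rw [← ball_prod_same] at *
        have : (ζ, w) ∈ ball pt σ' := mem_ball_prod.mpr ⟨hζ, hw⟩
        calc dist (ζ, w) pt < σ' := mem_ball.mp this
          _ ≤ σ := min_le_left _ _
      exact (hq.analyticOnNhd isOpen_ball).eqOn_zero_of_preconnected_of_eventuallyEq_zero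
        (convex_ball _ _).isPreconnected hpt1 hev1 hz
    -- Step (ii): vanishing on ball v ρ
    have hstep2 : ∀ u ∈ ball v ρ, h u = 0 := by
      intro u hu
      have huc := mem_ball_prod.mp hu
      have hq : DifferentiableOn ℂ (fun w => h (u.1, w)) (ball v.2 ρ) :=
        slice2 v ρ hρU u.1 huc.1
      have hev2 : (fun w => h (u.1, w)) =ᶠ[nhds pt.2] 0 := by
        filter_upwards [isOpen_ball.mem_nhds (mem_ball_self hσ'0)] with w hw
        exact hstep1 w hw u.1 huc.1
      have := (hq.analyticOnNhd isOpen_ball).eqOn_zero_of_preconnected_of_eventuallyEq_zero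
        (convex_ball _ _).isPreconnected hpt2 hev2 huc.2
      simpa using this
    refine ⟨hvU, ?_⟩
    filter_upwards [isOpen_ball.mem_nhds (mem_ball_self hρ0)] with u hu
    exact hstep2 u hu
  -- V is open
  have hVopen : IsOpen V := by
    rw [Metric.isOpen_iff]
    intro v hv
    obtain ⟨ρ₁, hρ₁0, hρ₁U⟩ := Metric.isOpen_iff.mp hUopen v hv.1
    obtain ⟨σ, hσ0, hσ⟩ := Metric.eventually_nhds_iff.mp hv.2
    refine ⟨min ρ₁ σ, lt_min hρ₁0 hσ0, ?_⟩
    intro u hu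
    have huU : u ∈ U := hρ₁U (lt_of_lt_of_le (mem_ball.mp hu) (min_le_left _ _))
    refine ⟨huU, ?_⟩
    have : ball u (min ρ₁ σ - dist u v) ⊆ ball v σ := by
      intro w hw
      rw [mem_ball]
      calc dist w v ≤ dist w u + dist u v := dist_triangle _ _ _
        _ < (min ρ₁ σ - dist u v) + dist u v := by linarith [mem_ball.mp hw]
        _ = min ρ₁ σ := by ring
        _ ≤ σ := min_le_right _ _
    filter_upwards [isOpen_ball.mem_nhds
      (mem_ball_self (by linarith [mem_ball.mp hu] : 0 < min ρ₁ σ - dist u v))] with w hw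
    exact hσ (mem_ball.mp (this hw))
  -- x₀ is not in the closure of V
  have hx₀ncl : x₀ ∉ closure V := by
    intro hcl
    have := (hclose x₀ hx₀U hcl).2.self_of_nhds
    exact hx₀ this
  -- preconnectedness
  have hsub : U ⊆ (closure V)ᶜ ∪ V := by
    intro u hu
    by_cases hcl : u ∈ closure V
    · exact Or.inr (hclose u hu hcl)
    · exact Or.inl hcl
  have hdisj : Disjoint ((closure V)ᶜ) V :=
    Set.disjoint_left.mpr fun a ha hav => ha (subset_closure hav)
  have := hUconn.isPreconnected.subset_left_of_subset_union
    (isOpen_compl_iff.mpr isClosed_closure) hVopen hdisj hsub ⟨x₀, hx₀U, hx₀ncl⟩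
  exact (this hyU) (subset_closure ⟨hyU, hev⟩)

end HolVanish

open HolVanish Metric

/-- Vanishing criterion: if a finite Borel measure `ν` on `ℂ²` has pointwise lower
dimension `≥ γ > 2` at `ν`-almost every point, and a holomorphic function `h` on a
connected open set `U` vanishes on a set of positive `ν`-measure, then `h ≡ 0` on `U`. -/
theorem holomorphic_vanishes_of_positive_measure_zero_set
    (ν : Measure (ℂ × ℂ)) [IsFiniteMeasure ν] (γ : ℝ) (hγ : 2 < γ)
    (hdim : ∀ᵐ x ∂ν, γ ≤
      liminf (fun r : ℝ => Real.log (ν (Metric.ball x r)).toReal / Real.log r)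
        (nhdsWithin 0 (Set.Ioi 0)))
    (U : Set (ℂ × ℂ)) (hUopen : IsOpen U) (hUconn : IsConnected U)
    (h : ℂ × ℂ → ℂ) (hhol : DifferentiableOn ℂ h U)
    (hpos : 0 < ν {x ∈ U | h x = 0}) :
    ∀ x ∈ U, h x = 0 := by
  by_contra hcon
  push_neg at hcon
  obtain ⟨x₀, hx₀U, hx₀⟩ := hcon
  have hnl := not_locally_zero hUopen hUconn hhol hx₀U hx₀
  set s : ℝ := (2 + γ) / 2 with hsdef
  have hs0 : 0 < s := by rw [hsdef]; linarith
  have hs2 : 2 < s := by rw [hsdef]; linarith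
  have hsγ : s < γ := by rw [hsdef]; linarith
  set Gd : Set (ℂ × ℂ) := {x | ∀ᶠ r in nhdsWithin (0:ℝ) (Set.Ioi 0),
    ν (ball x r) ≤ ENNReal.ofReal (r ^ s)} with hGddef
  have hae : ∀ᵐ x ∂ν, x ∈ Gd := ae_ball_decay ν hs0 hsγ hdim
  have hGc : ν Gdᶜ = 0 := by
    rw [ae_iff] at hae
    convert hae using 2
    rfl
  have hloc := fun (x : ℂ × ℂ) (hx : x ∈ U) => local_structure hUopen hhol hx (hnl x hx)
  choose! R hR0 hRU 𝒞 h𝒞c h𝒞cov h𝒞dim using hloc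
  obtain ⟨T, hTsub, hTc, hTcov⟩ := TopologicalSpace.countable_cover_nhdsWithin
    (f := fun x => ball x (R x)) (s := U)
    (fun x hx => nhdsWithin_le_nhds (ball_mem_nhds _ (hR0 x hx)))
  have hZsub : {x ∈ U | h x = 0} ∩ Gd ⊆ ⋃ x ∈ T, ⋃ A ∈ 𝒞 x, (A ∩ Gd) := by
    rintro y ⟨⟨hyU, hy0⟩, hyG⟩
    obtain ⟨x, hxT, hyball⟩ := Set.mem_iUnion₂.mp (hTcov hyU)
    obtain ⟨A, hA, hyA⟩ := h𝒞cov x (hTsub hxT) ⟨hyball, hy0⟩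
    exact Set.mem_iUnion₂.mpr ⟨x, hxT, Set.mem_iUnion₂.mpr ⟨A, hA, hyA, hyG⟩⟩
  have hZG : ν ({x ∈ U | h x = 0} ∩ Gd) = 0 := by
    refine measure_mono_null hZsub ?_
    rw [measure_biUnion_null_iff hTc]
    intro x hxT
    rw [measure_biUnion_null_iff (h𝒞c x (hTsub hxT))]
    intro A hA
    have hdim2 : dimH A ≤ 2 := h𝒞dim x (hTsub hxT) A hA
    have hH : μH[s] A = 0 := by
      have hlt : dimH A < ((s.toNNReal : NNReal) : ENNReal) := by
        refine lt_of_le_of_lt hdim2 ?_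
        have h2 : (2 : NNReal) < s.toNNReal := by
          rw [show (2 : NNReal) = Real.toNNReal 2 by simp]
          exact (Real.toNNReal_lt_toNNReal_iff hs0).mpr hs2
        exact_mod_cast h2
      have := hausdorffMeasure_of_dimH_lt hlt
      rwa [Real.coe_toNNReal s hs0.le] at this
    exact measure_inter_good_null hs0 (fun u hu => hu) hH
  have hZ : ν {x ∈ U | h x = 0} = 0 := by
    have hsplit : {x ∈ U | h x = 0} ⊆ ({x ∈ U | h x = 0} ∩ Gd) ∪ Gdᶜ := by
      intro u hu
      by_cases huG : u ∈ Gd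
      · exact Or.inl ⟨hu, huG⟩
      · exact Or.inr huG
    refine le_antisymm ?_ zero_le
    calc ν {x ∈ U | h x = 0} ≤ ν (({x ∈ U | h x = 0} ∩ Gd) ∪ Gdᶜ) := measure_mono hsplit
      _ ≤ ν ({x ∈ U | h x = 0} ∩ Gd) + ν Gdᶜ := measure_union_le _ _
      _ = 0 := by rw [hZG, hGc, add_zero]
  exact absurd hZ hpos.ne'
end

section
/- Let $\mu, \lambda, \mu_1^a, \mu_2^a$ be finite positive Borel measures on an open set $U$, $\Lambda'$ a signed measure, and $\alpha, \gamma$ bounded Borel functions on $U$, such that: (i) $\mu_2^a = |\alpha|^2 \lambda + \Lambda' + \rho$ where $\rho$ is a positive measure absolutely continuous with respect to $\mu$; (ii) $\mu_1^a \ll \mu$ and $\mu_2^a \ll \mu$; (iii) $|\Lambda'(A)| \leq C \sqrt{\mu_1^a(A)} \sqrt{\lambda(A)}$ for all Borel $A$ and some constant $C > 0$; (iv) $\lambda = h_1 \mu + \mu_1^s$ with $h_1 \in L^1(\mu)$, $h_1 \geq 0$, and $\mu_1^s \perp \mu$. Then $\int_A |\alpha|^2 \, d\mu_1^s = 0$ for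 every Borel set $A \subset U$; equivalently $\alpha = 0$ $\mu_1^s$-almost everywhere. -/
open MeasureTheory

/-- Core computation of the Patching Theorem: with `μ₂ᵃ = |α|²·λ + Λ' + ρ` where
`ρ ≪ μ`, `μ₁ᵃ ≪ μ`, `μ₂ᵃ ≪ μ`, a Cauchy–Schwarz bound `|Λ'(A)| ≤ C √μ₁ᵃ(A) √λ(A)`,
and `λ = h₁·μ + μ₁ˢ` with `μ₁ˢ ⟂ μ`, the function `α` vanishes `μ₁ˢ`-a.e., i.e.
`∫_A |α|² dμ₁ˢ = 0` for every Borel set `A`. -/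
theorem alpha_vanishes_on_singular_part
    {X : Type*} [MeasurableSpace X]
    (μ lam μ₁a μ₂a ρ μ₁s : Measure X)
    [IsFiniteMeasure μ] [IsFiniteMeasure lam] [IsFiniteMeasure μ₁a]
    [IsFiniteMeasure μ₂a] [IsFiniteMeasure ρ] [IsFiniteMeasure μ₁s]
    (Λ' : SignedMeasure X) (α : X → ℂ) (hαmeas : Measurable α)
    (hαbdd : ∃ M : ℝ, ∀ x, ‖α x‖ ≤ M)
    (h₁ : X → ENNReal) (hh₁ : Measurable h₁)
    (hdec : ∀ A : Set X, MeasurableSet A →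
      (μ₂a A).toReal = (∫ x in A, ‖α x‖ ^ 2 ∂lam) + Λ' A + (ρ A).toReal)
    (hρac : ρ ≪ μ) (hac₁ : μ₁a ≪ μ) (hac₂ : μ₂a ≪ μ)
    (C : ℝ) (hC : 0 < C)
    (hCS : ∀ A : Set X, MeasurableSet A →
      |Λ' A| ≤ C * Real.sqrt (μ₁a A).toReal * Real.sqrt (lam A).toReal)
    (hlam : lam = μ.withDensity h₁ + μ₁s) (hsing : μ₁s.MutuallySingular μ) :
    (∀ A : Set X, MeasurableSet A → (∫ x in A, ‖α x‖ ^ 2 ∂μ₁s) = 0)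
    ∧ ∀ᵐ x ∂μ₁s, α x = 0 := by
  obtain ⟨M, hM⟩ := hαbdd
  set f : X → ℝ := fun x => ‖α x‖ ^ 2 with hf
  have hfmeas : Measurable f := hαmeas.norm.pow measurable_const
  have hfnn : ∀ x, 0 ≤ f x := fun x => sq_nonneg _
  have hfbdd : ∀ x, ‖f x‖ ≤ M ^ 2 := by
    intro x
    rw [Real.norm_of_nonneg (hfnn x)]
    exact pow_le_pow_left₀ (norm_nonneg _) (hM x) 2
  have hint : ∀ (ν : Measure X) [IsFiniteMeasure ν], Integrable f ν := by
    intro ν _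
    exact ⟨hfmeas.aestronglyMeasurable,
      HasFiniteIntegral.of_bounded (C := M ^ 2) (Filter.Eventually.of_forall hfbdd)⟩
  -- the carrier set of μ₁s
  set T : Set X := hsing.nullSetᶜ with hT
  have hTmeas : MeasurableSet T := hsing.measurableSet_nullSet.compl
  have hμT : μ T = 0 := hsing.measure_compl_nullSet
  have hμ₁sTc : μ₁s Tᶜ = 0 := by
    simpa [hT] using hsing.measure_nullSet
  have key : ∀ A : Set X, MeasurableSet A → (∫ x in A, f x ∂μ₁s) = 0 := by
    intro A hA
    set B := A ∩ T with hB
    have hBmeas : MeasurableSet B := hA.inter hTmeas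
    have hμB : μ B = 0 := measure_mono_null Set.inter_subset_right hμT
    have hμ₁aB : μ₁a B = 0 := hac₁ hμB
    have hμ₂aB : μ₂a B = 0 := hac₂ hμB
    have hρB : ρ B = 0 := hρac hμB
    have hwdB : (μ.withDensity h₁) B = 0 := withDensity_absolutelyContinuous μ h₁ hμB
    -- Λ' B = 0
    have hΛB : Λ' B = 0 := by
      have h := hCS B hBmeas
      rw [hμ₁aB] at h
      have hb : C * Real.sqrt ((0 : ENNReal)).toReal * Real.sqrt (lam B).toReal = 0 := by
        simp
      rw [hb] at h
      exact abs_eq_zero.mp (le_antisymm h (abs_nonneg _))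
    -- integral over B w.r.t. lam vanishes
    have hIlam : (∫ x in B, f x ∂lam) = 0 := by
      have := hdec B hBmeas
      rw [hμ₂aB, hρB, hΛB] at this
      simp at this
      linarith
    -- lam restricted to B equals (withDensity part) + μ₁s part, withDensity part is null on B
    have hres : lam.restrict B = (μ.withDensity h₁).restrict B + μ₁s.restrict B := by
      rw [hlam, Measure.restrict_add]
    have hwd0 : (μ.withDensity h₁).restrict B = 0 :=
      Measure.restrict_eq_zero.mpr hwdB
    have hIμ₁s : (∫ x in B, f x ∂μ₁s) = 0 := by
      have : (∫ x in B, f x ∂lam) = (∫ x in B, f x ∂μ₁s) := by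
        rw [hres, hwd0, zero_add]
      rw [← this, hIlam]
    -- A and B agree μ₁s-a.e.
    have hAB : A =ᵐ[μ₁s] B := by
      rw [MeasureTheory.ae_eq_set]
      constructor
      · refine measure_mono_null ?_ hμ₁sTc
        intro x hx
        simp only [hB, Set.mem_diff, Set.mem_inter_iff, not_and] at hx
        exact fun hxT => hx.2 hx.1 hxT
      · rw [Set.diff_eq_empty.mpr (by rw [hB]; exact Set.inter_subset_left)]
        exact measure_empty
    calc (∫ x in A, f x ∂μ₁s) = ∫ x in B, f x ∂μ₁s := by
          exact setIntegral_congr_set hAB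
      _ = 0 := hIμ₁s
  refine ⟨key, ?_⟩
  have huniv : (∫ x, f x ∂μ₁s) = 0 := by
    simpa using key Set.univ MeasurableSet.univ
  have hae : f =ᵐ[μ₁s] 0 :=
    (integral_eq_zero_iff_of_nonneg hfnn (hint μ₁s)).mp huniv
  filter_upwards [hae] with x hx
  simpa [hf] using hx
end
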